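/- Let (Y_t)_{t∈[0,1]} be the edge-field denoising process for a distribution μ on {0,1}^V over a graph G=(V,E), and fix θ ∈ (0,1). Suppose that for every subset Λ ⊆ V and every feasible pinning τ, the second-order correlation matrix of the edge-tilted measure satisfies λ_max(Cor^{(2)}_{(1−θ')⊗μ^τ}) ≤ C for all θ' ∈ [0, θ]. Then (Y_t) is spectrally (χ²-entropically) stable with rate C at every time up to θ. -/

import Mathlib

open scoped BigOperators Classical

set_option maxHeartbeats 1000000

noncomputable section

variable {V : Type*} [Fintype V] [DecidableEq V]

/-- The event that both endpoints of the edge `e` carry the spin `1`. -/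
def bothOnes (σ : V → Bool) (e : Sym2 V) : Prop := ∀ v ∈ e, σ v = true

/-- Number of edges of `G` whose two endpoints both carry the spin `1` in `σ`. -/
def mEdges (G : SimpleGraph V) [DecidableRel G.Adj] (σ : V → Bool) : ℕ :=
  (G.edgeFinset.filter (bothOnes σ)).card

/-- Weight of `σ` under the vertex-pinned, edge-tilted measure `(1−θ')⊗μ^τ`
(pinning the vertices of `Λ` to the values of `τ`). -/
def tiltV (G : SimpleGraph V) [DecidableRel G.Adj] (μ : (V → Bool) → ℝ) (θ' : ℝ)
    (Λ : Finset V) (τ : V → Bool) (σ : V → Bool) : ℝ :=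
  μ σ * (1 - θ') ^ (mEdges G σ) * (if ∀ v ∈ Λ, σ v = τ v then 1 else 0)

/-- Weight of `σ` under the edge-event-pinned, edge-tilted measure `(1−t)⊗μ^S`
(conditioning on all edge events in `S` occurring). -/
def tiltE (G : SimpleGraph V) [DecidableRel G.Adj] (μ : (V → Bool) → ℝ) (t : ℝ)
    (S : Finset (Sym2 V)) (σ : V → Bool) : ℝ :=
  μ σ * (1 - t) ^ (mEdges G σ) * (if ∀ e ∈ S, bothOnes σ e then 1 else 0)

/-- Probability of the event `E` under the (unnormalized) weight `w`. -/
def prW (w : (V → Bool) → ℝ) (E : (V → Bool) → Prop) : ℝ :=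
  (∑ σ, w σ * (if E σ then 1 else 0)) / (∑ σ, w σ)

/-- Second-order correlation matrix `Cor^{(2)}` of the measure with weight `w`, indexed by
edges of `G`: `Cor^{(2)}(uv, wz) = ν(wz | uv) − ν(wz)` when `ν(uv) > 0`, else `0`. -/
def corMat (G : SimpleGraph V) [DecidableRel G.Adj] (w : (V → Bool) → ℝ) :
    Matrix {e : Sym2 V // e ∈ G.edgeFinset} {e : Sym2 V // e ∈ G.edgeFinset} ℝ :=
  fun e f =>
    if 0 < prW w (fun σ => bothOnes σ e.1) then
      prW (fun σ => w σ * (if bothOnes σ e.1 then 1 else 0)) (fun σ => bothOnes σ f.1)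
        - prW w (fun σ => bothOnes σ f.1)
    else 0

/-! ### Auxiliary spectral lemmas -/

section SpecAux
open Matrix

variable {n : Type*} [Fintype n] [DecidableEq n]

lemma mem_spectrum_of_mulVec_eq {M : Matrix n n ℝ} {r : ℝ} {v : n → ℝ}
    (hv0 : v ≠ 0) (hv : M *ᵥ v = r • v) : r ∈ spectrum ℝ M := by
  rw [← AlgEquiv.spectrum_eq (Matrix.toLinAlgEquiv' : Matrix n n ℝ ≃ₐ[ℝ] _) M,
    ← Module.End.hasEigenvalue_iff_mem_spectrum]
  exact Module.End.hasEigenvalue_of_hasEigenvector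
    ⟨Module.End.mem_eigenspace_iff.mpr (by rw [Matrix.toLinAlgEquiv'_apply, hv]), hv0⟩

lemma exists_mulVec_eq_of_mem_spectrum {M : Matrix n n ℝ} {r : ℝ}
    (h : r ∈ spectrum ℝ M) : ∃ v : n → ℝ, v ≠ 0 ∧ M *ᵥ v = r • v := by
  rw [← AlgEquiv.spectrum_eq (Matrix.toLinAlgEquiv' : Matrix n n ℝ ≃ₐ[ℝ] _) M,
    ← Module.End.hasEigenvalue_iff_mem_spectrum] at h
  obtain ⟨v, hv⟩ := h.exists_hasEigenvector
  exact ⟨v, hv.2, by rw [← Matrix.toLinAlgEquiv'_apply, hv.apply_eq_smul]⟩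

/-- The key abstract inequality: if the "conditional correlation" matrix
`Cor(e,f) = Q e f / p e` has real spectrum bounded by `C`, then the quadratic form of
the symmetric matrix `Q` is dominated by `C` times the `p`-weighted square norm. -/
lemma quad_form_le_of_spectrum (C : ℝ) (hC : 0 < C) (p : n → ℝ) (hp : ∀ e, 0 ≤ p e)
    (Q : n → n → ℝ) (hQsym : ∀ e f, Q e f = Q f e)
    (hQ0 : ∀ e f, p e = 0 → Q e f = 0)
    (hspec : ∀ r ∈ spectrum ℝ
      (Matrix.of fun e f => if 0 < p e then Q e f / p e else 0 : Matrix n n ℝ), r ≤ C)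
    (x : n → ℝ) :
    ∑ e, ∑ f, x e * Q e f * x f ≤ C * ∑ e, p e * x e ^ 2 := by
  set s : n → ℝ := fun e => Real.sqrt (p e) with hs
  have hs2 : ∀ e, s e * s e = p e := fun e => Real.mul_self_sqrt (hp e)
  have hspos : ∀ e, 0 < p e → 0 < s e := fun e h => Real.sqrt_pos.mpr h
  have hQ0' : ∀ e f, p f = 0 → Q e f = 0 := fun e f h => (hQsym e f).trans (hQ0 f e h)
  set A : Matrix n n ℝ :=
    Matrix.of (fun e f => if 0 < p e ∧ 0 < p f then Q e f / (s e * s f) else 0) with hA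
  have hAsym : ∀ e f, A f e = A e f := by
    intro e f
    by_cases h1 : 0 < p e <;> by_cases h2 : 0 < p f <;>
      simp [hA, h1, h2, hQsym f e, mul_comm]
  have hAherm : A.IsHermitian := Matrix.ext fun e f => by
    rw [Matrix.conjTranspose_apply, star_trivial, hAsym]
  have hC1herm : (C • (1 : Matrix n n ℝ)).IsHermitian := by
    show (C • (1 : Matrix n n ℝ))ᴴ = C • (1 : Matrix n n ℝ)
    rw [Matrix.conjTranspose_smul, star_trivial, Matrix.conjTranspose_one]
  -- spectrum of A is bounded by C
  have hAspec : ∀ r ∈ spectrum ℝ A, r ≤ C := by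
    intro r hr
    rcases eq_or_ne r 0 with rfl | hr0
    · exact hC.le
    obtain ⟨v, hv0, hv⟩ := exists_mulVec_eq_of_mem_spectrum hr
    have hsupp : ∀ e, ¬ 0 < p e → v e = 0 := by
      intro e he
      have h1 : (A *ᵥ v) e = 0 := by
        simp [Matrix.mulVec, dotProduct, hA, he]
      rw [hv] at h1
      simpa [hr0] using h1
    set u : n → ℝ := fun e => if 0 < p e then v e / s e else 0 with hu
    have hu0 : u ≠ 0 := by
      obtain ⟨e, he⟩ := Function.ne_iff.mp hv0
      have hpe : 0 < p e := by
        by_contra h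
        exact he (hsupp e h)
      intro h
      have := congrFun h e
      simp only [hu, hpe, if_pos, Pi.zero_apply] at this
      have hse : s e ≠ 0 := (hspos e hpe).ne'
      rw [div_eq_zero_iff, or_iff_left hse] at this
      exact he this
    have key : (Matrix.of fun e f => if 0 < p e then Q e f / p e else 0 : Matrix n n ℝ) *ᵥ u
        = r • u := by
      funext e
      simp only [Matrix.mulVec, dotProduct, Matrix.of_apply, Pi.smul_apply, smul_eq_mul]
      by_cases he : 0 < p e
      · have hse : s e ≠ 0 := (hspos e he).ne'
        have hterm : ∀ f, (if 0 < p e then Q e f / p e else 0) * u f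
            = (A e f * v f) / s e := by
          intro f
          by_cases hf : 0 < p f
          · have hsf : s f ≠ 0 := (hspos f hf).ne'
            simp only [hu, hA, Matrix.of_apply, he, hf, and_self, if_true]
            rw [← hs2 e]
            ring
          · simp [hu, hA, hf, he]
        have hAv : ∑ f, A e f * v f = r * v e := by
          have := congrFun hv e
          simpa [Matrix.mulVec, dotProduct] using this
        rw [Finset.sum_congr rfl (fun f _ => hterm f), ← Finset.sum_div, hAv]
        simp only [hu, he, if_true]
        rw [mul_div_assoc]
      · simp [hu, he]
    exact hspec r (mem_spectrum_of_mulVec_eq hu0 key)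
  -- C • 1 - A is positive semidefinite
  set B : Matrix n n ℝ := C • (1 : Matrix n n ℝ) - A with hB
  have hBherm : B.IsHermitian := hC1herm.sub hAherm
  have hBspec : ∀ μ ∈ spectrum ℝ B, 0 ≤ μ := by
    intro μ hμ
    have hBe : B = (algebraMap ℝ (Matrix n n ℝ)) C - A := by
      rw [Algebra.algebraMap_eq_smul_one]
    rw [hBe, ← spectrum.singleton_sub_eq] at hμ
    obtain ⟨a, ha, b, hb, rfl⟩ := Set.mem_sub.mp hμ
    rw [Set.mem_singleton_iff] at ha
    subst ha
    linarith [hAspec b hb]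
  have hBpsd : B.PosSemidef :=
    hBherm.posSemidef_iff_eigenvalues_nonneg.mpr (by
      intro i; exact hBspec _ (hBherm.eigenvalues_mem_spectrum_real i))
  set y : n → ℝ := fun e => s e * x e with hy
  have h0 := hBpsd.dotProduct_mulVec_nonneg y
  have hdot : dotProduct (star y) (B *ᵥ y)
      = C * (∑ e, p e * x e ^ 2) - ∑ e, ∑ f, x e * Q e f * x f := by
    rw [hB, Matrix.sub_mulVec, Matrix.smul_mulVec, Matrix.one_mulVec,
      dotProduct_sub, dotProduct_smul]
    have h1 : dotProduct (star y) y = ∑ e, p e * x e ^ 2 := by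
      simp only [dotProduct, Pi.star_apply, star_trivial, hy]
      exact Finset.sum_congr rfl fun e _ => by rw [← hs2 e]; ring
    have h2 : dotProduct (star y) (A *ᵥ y) = ∑ e, ∑ f, x e * Q e f * x f := by
      simp only [dotProduct, Matrix.mulVec, Pi.star_apply, star_trivial]
      refine Finset.sum_congr rfl fun e _ => ?_
      rw [Finset.mul_sum]
      refine Finset.sum_congr rfl fun f _ => ?_
      by_cases h1' : 0 < p e
      · by_cases h2' : 0 < p f
        · have hse : s e ≠ 0 := (hspos e h1').ne'
          have hsf : s f ≠ 0 := (hspos f h2').ne'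
          simp only [hA, Matrix.of_apply, h1', h2', and_self, if_pos, hy]
          field_simp
        · have : Q e f = 0 := hQ0' e f (le_antisymm (not_lt.mp h2') (hp f))
          simp [hA, h2', this]
      · have : Q e f = 0 := hQ0 e f (le_antisymm (not_lt.mp h1') (hp e))
        simp [hA, h1', this]
    rw [h1, h2, smul_eq_mul]
  rw [hdot] at h0
  linarith

end SpecAux

/-! ### Auxiliary lemmas about `prW` and `corMat` -/

section WAux

variable (w : (V → Bool) → ℝ)

lemma numW_nonneg (hw0 : ∀ σ, 0 ≤ w σ) (E : (V → Bool) → Prop) :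
    0 ≤ ∑ σ, w σ * (if E σ then 1 else 0) :=
  Finset.sum_nonneg fun σ _ => mul_nonneg (hw0 σ) (by split <;> norm_num)

lemma prW_nonneg (hw0 : ∀ σ, 0 ≤ w σ) (hZ : 0 < ∑ σ, w σ) (E : (V → Bool) → Prop) :
    0 ≤ prW w E :=
  div_nonneg (numW_nonneg w hw0 E) hZ.le

lemma numW_mono (hw0 : ∀ σ, 0 ≤ w σ) (E F : (V → Bool) → Prop) (h : ∀ σ, E σ → F σ) :
    (∑ σ, w σ * (if E σ then 1 else 0)) ≤ ∑ σ, w σ * (if F σ then 1 else 0) := by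
  refine Finset.sum_le_sum fun σ _ => mul_le_mul_of_nonneg_left ?_ (hw0 σ)
  by_cases hE : E σ
  · rw [if_pos hE, if_pos (h σ hE)]
  · rw [if_neg hE]; split <;> norm_num

lemma prW_mono (hw0 : ∀ σ, 0 ≤ w σ) (hZ : 0 < ∑ σ, w σ) (E F : (V → Bool) → Prop)
    (h : ∀ σ, E σ → F σ) : prW w E ≤ prW w F :=
  (div_le_div_iff_of_pos_right hZ).mpr (numW_mono w hw0 E F h)

lemma corMat_eq (G : SimpleGraph V) [DecidableRel G.Adj]
    (hZ : 0 < ∑ σ, w σ) :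
    corMat G w = Matrix.of (fun e f : {e : Sym2 V // e ∈ G.edgeFinset} =>
      if 0 < prW w (fun σ => bothOnes σ e.1) then
        (prW w (fun σ => bothOnes σ e.1 ∧ bothOnes σ f.1)
          - prW w (fun σ => bothOnes σ e.1) * prW w (fun σ => bothOnes σ f.1))
          / prW w (fun σ => bothOnes σ e.1)
      else 0) := by
  funext e f
  show (if 0 < prW w (fun σ => bothOnes σ e.1) then
      prW (fun σ => w σ * (if bothOnes σ e.1 then 1 else 0)) (fun σ => bothOnes σ f.1)
        - prW w (fun σ => bothOnes σ f.1) else 0) = _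
  simp only [Matrix.of_apply]
  by_cases he : 0 < prW w (fun σ => bothOnes σ e.1)
  · rw [if_pos he, if_pos he]
    have hZne : (∑ σ, w σ) ≠ 0 := hZ.ne'
    have hNepos : 0 < ∑ σ, w σ * (if bothOnes σ e.1 then 1 else 0) := by
      have h := mul_pos he hZ
      unfold prW at h
      rwa [div_mul_cancel₀ _ hZne] at h
    have hnum : (∑ σ, (w σ * (if bothOnes σ e.1 then 1 else 0))
          * (if bothOnes σ f.1 then 1 else 0))
        = ∑ σ, w σ * (if bothOnes σ e.1 ∧ bothOnes σ f.1 then 1 else 0) := by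
      refine Finset.sum_congr rfl fun σ _ => ?_
      by_cases hA : bothOnes σ e.1 <;> by_cases hB : bothOnes σ f.1 <;> simp [hA, hB]
    have hcond : prW (fun σ => w σ * (if bothOnes σ e.1 then 1 else 0))
          (fun σ => bothOnes σ f.1)
        = prW w (fun σ => bothOnes σ e.1 ∧ bothOnes σ f.1)
          / prW w (fun σ => bothOnes σ e.1) := by
      unfold prW
      rw [hnum, ← div_div_div_cancel_right₀ hZne
        (∑ σ, w σ * (if bothOnes σ e.1 ∧ bothOnes σ f.1 then (1:ℝ) else 0))]
      congr!
    rw [hcond]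
    field_simp
  · rw [if_neg he, if_neg he]

end WAux

/-- **Spectral stability of the edge-field denoising process via second-order correlations.**
If for all vertex pinnings `(Λ, τ)` and all tilts `θ' ∈ [0,θ]` the eigenvalues of the
second-order correlation matrix of `(1−θ')⊗μ^τ` are at most `C`, then the edge-field
denoising process for `μ` is spectrally (χ²-entropically) stable with rate `C` up to
time `θ`: for every `t ∈ [0,θ]` and every feasible edge pinning `S`, the covariance
matrix of the edge-event indicators under `(1−t)⊗μ^S` is dominated by `C` times the
diagonal matrix of their means. -/
theorem edge_field_spectral_stability (G : SimpleGraph V) [DecidableRel G.Adj]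
    (μ : (V → Bool) → ℝ) (hμ0 : ∀ σ, 0 ≤ μ σ) (hμ1 : ∑ σ, μ σ = 1)
    (θ : ℝ) (hθ : θ ∈ Set.Ioo (0:ℝ) 1) (C : ℝ) (hC : 0 < C)
    (hcor : ∀ θ' ∈ Set.Icc (0:ℝ) θ, ∀ (Λ : Finset V) (τ : V → Bool),
      0 < (∑ σ, tiltV G μ θ' Λ τ σ) →
      ∀ r ∈ spectrum ℝ (corMat G (tiltV G μ θ' Λ τ)), r ≤ C) :
    ∀ t ∈ Set.Icc (0:ℝ) θ, ∀ S : Finset (Sym2 V), S ⊆ G.edgeFinset →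
      0 < (∑ σ, tiltE G μ t S σ) →
      ∀ x : {e : Sym2 V // e ∈ G.edgeFinset} → ℝ,
        (∑ e, ∑ f, x e *
            (prW (tiltE G μ t S) (fun σ => bothOnes σ e.1 ∧ bothOnes σ f.1)
              - prW (tiltE G μ t S) (fun σ => bothOnes σ e.1)
                * prW (tiltE G μ t S) (fun σ => bothOnes σ f.1)) * x f)
          ≤ C * ∑ e, prW (tiltE G μ t S) (fun σ => bothOnes σ e.1) * x e ^ 2 := by
  intro t ht S hS hZ x
  have h1t : (0:ℝ) ≤ 1 - t := by
    have h2 := ht.2; have h3 := hθ.2; linarith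
  have hw0 : ∀ σ, 0 ≤ tiltE G μ t S σ := by
    intro σ
    refine mul_nonneg (mul_nonneg (hμ0 σ) (pow_nonneg h1t _)) ?_
    split <;> norm_num
  -- the vertex pinning that realizes the edge-event pinning `S`
  set Λ : Finset V := Finset.univ.filter (fun v => ∃ e ∈ S, v ∈ e) with hΛ
  set τ : V → Bool := fun _ => true with hτ
  have hVE : tiltV G μ t Λ τ = tiltE G μ t S := by
    funext σ
    unfold tiltV tiltE
    congr 1
    refine if_congr ⟨?_, ?_⟩ rfl rfl
    · intro h e he v hv
      exact h v (Finset.mem_filter.mpr ⟨Finset.mem_univ v, ⟨e, he, hv⟩⟩)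
    · intro h v hv
      obtain ⟨e, he, hve⟩ := (Finset.mem_filter.mp hv).2
      exact h e he v hve
  have hZV : 0 < ∑ σ, tiltV G μ t Λ τ σ := by rw [hVE]; exact hZ
  have hcor' := hcor t ⟨ht.1, ht.2⟩ Λ τ hZV
  rw [hVE, corMat_eq (tiltE G μ t S) G hZ] at hcor'
  have hand : ∀ (a b : Sym2 V),
      (fun σ : V → Bool => bothOnes σ a ∧ bothOnes σ b)
        = (fun σ => bothOnes σ b ∧ bothOnes σ a) :=
    fun a b => funext fun σ => propext and_comm
  have hp : ∀ e : {e : Sym2 V // e ∈ G.edgeFinset},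
      0 ≤ prW (tiltE G μ t S) (fun σ => bothOnes σ e.1) :=
    fun e => prW_nonneg _ hw0 hZ _
  have hQsym : ∀ e f : {e : Sym2 V // e ∈ G.edgeFinset},
      (prW (tiltE G μ t S) (fun σ => bothOnes σ e.1 ∧ bothOnes σ f.1)
        - prW (tiltE G μ t S) (fun σ => bothOnes σ e.1)
          * prW (tiltE G μ t S) (fun σ => bothOnes σ f.1))
      = (prW (tiltE G μ t S) (fun σ => bothOnes σ f.1 ∧ bothOnes σ e.1)
        - prW (tiltE G μ t S) (fun σ => bothOnes σ f.1)
          * prW (tiltE G μ t S) (fun σ => bothOnes σ e.1)) := by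
    intro e f
    rw [hand e.1 f.1, mul_comm]
  have hQ0 : ∀ e f : {e : Sym2 V // e ∈ G.edgeFinset},
      prW (tiltE G μ t S) (fun σ => bothOnes σ e.1) = 0 →
      (prW (tiltE G μ t S) (fun σ => bothOnes σ e.1 ∧ bothOnes σ f.1)
        - prW (tiltE G μ t S) (fun σ => bothOnes σ e.1)
          * prW (tiltE G μ t S) (fun σ => bothOnes σ f.1)) = 0 := by
    intro e f hpe
    have h1 : prW (tiltE G μ t S) (fun σ => bothOnes σ e.1 ∧ bothOnes σ f.1) = 0 :=
      le_antisymm (by rw [← hpe]; exact prW_mono _ hw0 hZ _ _ (fun σ h => h.1))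
        (prW_nonneg _ hw0 hZ _)
    rw [h1, hpe]; ring
  exact quad_form_le_of_spectrum C hC _ hp _ hQsym hQ0 hcor' x

end
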